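/- Let γ > 0, λ > 0, and 0 < a < b with γλa and γλb both integer multiples of 2π, and suppose moreover 2a < b/2. If 2γλs is an integer multiple of π at s = 2a and s = b/2, then ∫_{2a}^{b/2} cos(2γλs)/s ds = (1/(2γλ))·∫_{2a}^{b/2} sin(2γλs)/s² ds ≤ 1/(4γλa), and consequently ∫_{2a}^{b/2} sin²(γλs)/s ds ≥ (1/2)·( log(b/(4a)) − 1/(4γλa) ). -/

import Mathlib

open Set MeasureTheory

theorem stmt11 (γ lam a b : ℝ) (hγ : 0 < γ) (hlam : 0 < lam) (ha : 0 < a)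
    (hab : 2 * a < b / 2) (hbb : b / 2 < b)
    (hka : ∃ m : ℕ, γ * lam * a = 2 * Real.pi * m)
    (hkb : ∃ n : ℕ, γ * lam * b = 2 * Real.pi * n)
    (hk2a : ∃ p : ℕ, 2 * γ * lam * (2 * a) = Real.pi * p)
    (hk2b : ∃ q : ℕ, 2 * γ * lam * (b / 2) = Real.pi * q) :
    (∫ s in (2 * a)..(b / 2), Real.cos (2 * γ * lam * s) / s) =
        1 / (2 * γ * lam) * ∫ s in (2 * a)..(b / 2), Real.sin (2 * γ * lam * s) / s ^ 2 ∧
    (∫ s in (2 * a)..(b / 2), Real.cos (2 * γ * lam * s) / s) ≤ 1 / (4 * γ * lam * a) ∧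
    (∫ s in (2 * a)..(b / 2), (Real.sin (γ * lam * s)) ^ 2 / s) ≥
      1 / 2 * (Real.log (b / (4 * a)) - 1 / (4 * γ * lam * a)) := by
  obtain ⟨p, hp⟩ := hk2a
  obtain ⟨q, hq⟩ := hk2b
  have hc : (0:ℝ) < 2 * γ * lam := by positivity
  have hle : (2*a) ≤ b/2 := hab.le
  have hIcc : uIcc (2*a) (b/2) = Icc (2*a) (b/2) := uIcc_of_le hle
  have hpos : ∀ x ∈ uIcc (2*a) (b/2), 0 < x := by
    intro x hx; rw [hIcc] at hx; have := hx.1; linarith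
  have hne : ∀ x ∈ uIcc (2*a) (b/2), x ≠ 0 := fun x hx => (hpos x hx).ne'
  have hsa : Real.sin (2*γ*lam * (2*a)) = 0 := by
    rw [hp, mul_comm, Real.sin_nat_mul_pi]
  have hsb : Real.sin (2*γ*lam * (b/2)) = 0 := by
    rw [hq, mul_comm, Real.sin_nat_mul_pi]
  -- integrability
  have hi_cos : IntervalIntegrable (fun x => Real.cos (2*γ*lam*x) / x) volume (2*a) (b/2) := by
    apply ContinuousOn.intervalIntegrable
    exact ((Real.continuous_cos.comp (continuous_const.mul continuous_id)).continuousOn).div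
      continuousOn_id hne
  have hi_sin2 : IntervalIntegrable (fun x => Real.sin (2*γ*lam*x) / x^2) volume (2*a) (b/2) := by
    apply ContinuousOn.intervalIntegrable
    apply ContinuousOn.div
      ((Real.continuous_sin.comp (continuous_const.mul continuous_id)).continuousOn)
      (continuousOn_id.pow 2)
    intro x hx; exact pow_ne_zero 2 (hne x hx)
  have hi_invsq : IntervalIntegrable (fun x : ℝ => (x^2)⁻¹) volume (2*a) (b/2) := by
    apply ContinuousOn.intervalIntegrable
    exact (continuousOn_id.pow 2).inv₀ (fun x hx => pow_ne_zero 2 (hne x hx))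
  have hi_inv : IntervalIntegrable (fun x : ℝ => 1 / x) volume (2*a) (b/2) := by
    apply ContinuousOn.intervalIntegrable
    exact continuousOn_const.div continuousOn_id hne
  -- Part 1: integration by parts
  have part1 : (∫ s in (2 * a)..(b / 2), Real.cos (2 * γ * lam * s) / s) =
      1 / (2 * γ * lam) * ∫ s in (2 * a)..(b / 2), Real.sin (2 * γ * lam * s) / s ^ 2 := by
    have hu : ∀ x ∈ uIcc (2*a) (b/2),
        HasDerivAt (fun y : ℝ => y⁻¹) (-(x^2)⁻¹) x := fun x hx => hasDerivAt_inv (hne x hx)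
    have hv : ∀ x ∈ uIcc (2*a) (b/2),
        HasDerivAt (fun y : ℝ => Real.sin (2*γ*lam*y) / (2*γ*lam)) (Real.cos (2*γ*lam*x)) x := by
      intro x _
      have h1 : HasDerivAt (fun y : ℝ => 2*γ*lam*y) (2*γ*lam) x := by
        simpa using (hasDerivAt_id x).const_mul (2*γ*lam)
      have h3 := ((Real.hasDerivAt_sin (2*γ*lam*x)).comp x h1).div_const (2*γ*lam)
      have he : Real.cos (2*γ*lam*x) * (2*γ*lam) / (2*γ*lam) = Real.cos (2*γ*lam*x) := by
        field_simp
      rw [← he]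
      exact h3
    have hiu' : IntervalIntegrable (fun x : ℝ => -(x^2)⁻¹) volume (2*a) (b/2) := hi_invsq.neg
    have hiv' : IntervalIntegrable (fun x : ℝ => Real.cos (2*γ*lam*x)) volume (2*a) (b/2) :=
      (Real.continuous_cos.comp (continuous_const.mul continuous_id)).intervalIntegrable _ _
    have key := intervalIntegral.integral_mul_deriv_eq_deriv_mul hu hv hiu' hiv'
    have e1 : (∫ s in (2 * a)..(b / 2), Real.cos (2 * γ * lam * s) / s) =
        ∫ x in (2*a)..(b/2), x⁻¹ * Real.cos (2*γ*lam*x) := by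
      apply intervalIntegral.integral_congr
      intro x hx
      exact div_eq_inv_mul _ _
    have e2 : (1 / (2 * γ * lam) * ∫ s in (2 * a)..(b / 2), Real.sin (2 * γ * lam * s) / s ^ 2) =
        ∫ x in (2*a)..(b/2), 1 / (2*γ*lam) * (Real.sin (2*γ*lam*x) / x^2) :=
      (intervalIntegral.integral_const_mul _ _).symm
    rw [e1, e2, key, hsa, hsb]
    simp only [mul_zero, zero_div, div_zero, zero_mul, sub_zero, zero_sub]
    rw [← intervalIntegral.integral_neg]
    apply intervalIntegral.integral_congr
    intro x hx
    ring
  -- Part 2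
  have hinvsq_val : (∫ x in (2*a)..(b/2), (x^2)⁻¹) = (2*a)⁻¹ - (b/2)⁻¹ := by
    have : ∀ x ∈ uIcc (2*a) (b/2), HasDerivAt (fun y : ℝ => -y⁻¹) ((x^2)⁻¹) x := by
      intro x hx
      simpa using (hasDerivAt_inv (hne x hx)).fun_neg
    rw [intervalIntegral.integral_eq_sub_of_hasDerivAt this hi_invsq]
    ring
  have hmono : (∫ x in (2*a)..(b/2), Real.sin (2*γ*lam*x) / x^2) ≤
      ∫ x in (2*a)..(b/2), (x^2)⁻¹ := by
    apply intervalIntegral.integral_mono_on hle hi_sin2 hi_invsq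
    intro x hx
    have hx0 : 0 < x := by have := hx.1; linarith
    rw [inv_eq_one_div]
    apply div_le_div_of_nonneg_right ?_ ?_ |>.trans_eq rfl
    · exact Real.sin_le_one _
    · positivity
  have part2 : (∫ s in (2 * a)..(b / 2), Real.cos (2 * γ * lam * s) / s) ≤ 1 / (4 * γ * lam * a) := by
    rw [part1]
    have h1 : (∫ x in (2*a)..(b/2), Real.sin (2*γ*lam*x) / x^2) ≤ (2*a)⁻¹ := by
      refine hmono.trans ?_
      rw [hinvsq_val]
      have hb2 : 0 < b/2 := lt_trans (by positivity) hab
      have : 0 < (b/2)⁻¹ := by positivity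
      linarith
    have h2 : 1 / (2*γ*lam) * (2*a)⁻¹ = 1 / (4*γ*lam*a) := by
      field_simp; ring
    calc 1 / (2 * γ * lam) * ∫ s in (2 * a)..(b / 2), Real.sin (2 * γ * lam * s) / s ^ 2
        ≤ 1 / (2*γ*lam) * (2*a)⁻¹ := by
          apply mul_le_mul_of_nonneg_left h1 (by positivity)
      _ = 1 / (4*γ*lam*a) := h2
  refine ⟨part1, part2, ?_⟩
  -- Part 3
  have hlog : (∫ x in (2*a)..(b/2), 1 / x) = Real.log (b / (4*a)) := by
    rw [integral_one_div (fun h => (hne 0 h) rfl), div_div]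
    congr 2
    ring
  have e3 : (∫ s in (2 * a)..(b / 2), (Real.sin (γ * lam * s)) ^ 2 / s) =
      ∫ x in (2*a)..(b/2), (1/2 * (1/x) - 1/2 * (Real.cos (2*γ*lam*x) / x)) := by
    apply intervalIntegral.integral_congr
    intro x hx
    have hx0 := hne x hx
    have harg : 2 * (γ*lam*x) = 2*γ*lam*x := by ring
    show Real.sin (γ * lam * x) ^ 2 / x = 1/2 * (1/x) - 1/2 * (Real.cos (2*γ*lam*x) / x)
    rw [Real.sin_sq_eq_half_sub, harg]
    ring
  rw [ge_iff_le, e3, intervalIntegral.integral_sub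
      ((hi_inv.const_mul (1/2 : ℝ))) ((hi_cos.const_mul (1/2 : ℝ))),
    intervalIntegral.integral_const_mul, intervalIntegral.integral_const_mul, hlog]
  linarith [part2]
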